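/- Let π(κ | x, τ) ∝ κ^{a-1/2} (1-κ)^{-a-1} L((1/τ²)(1/κ - 1)) e^{-κx²/2} on (0,1), where K ∫_0^∞ t^{-a-1} L(t) dt = 1 with K > 0. Then for any fixed ε ∈ (0,1) and τ > 0, P(κ < ε | x, τ) ≤ K e^{x²/2} (∫_{(1/τ²)(1/ε - 1)}^∞ t^{-a-1} L(t) dt) · (1+o(1)), where the o(1) term is uniform in x and tends to 0 as τ → 0. -/

import Mathlib

open MeasureTheory Filter Set Topology

/-- The unnormalized posterior density of the shrinkage coefficient `κ ∈ (0,1)`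
given observation `x` and global parameter `τ`. -/
noncomputable def postDens (a : ℝ) (L : ℝ → ℝ) (τ x κ : ℝ) : ℝ :=
  κ ^ (a - 1/2) * (1 - κ) ^ (-a - 1) * L ((1 / τ ^ 2) * (1 / κ - 1)) *
    Real.exp (-(κ * x ^ 2) / 2)

lemma phi_image {τ c : ℝ} (hτ : 0 < τ) (hc : 0 ≤ c) :
    (fun t => (1 + τ^2 * t)⁻¹) '' Ioi c = Ioo 0 (1 + τ^2 * c)⁻¹ := by
  have hτ2 : 0 < τ^2 := by positivity
  ext κ
  constructor
  · rintro ⟨t, ht, rfl⟩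
    have ht' : c < t := ht
    have h1 : 0 < 1 + τ^2 * c := by positivity
    have h2 : 1 + τ^2 * c < 1 + τ^2 * t := by nlinarith
    exact ⟨inv_pos.mpr (by nlinarith), inv_strictAnti₀ h1 h2⟩
  · rintro ⟨hκ0, hκ⟩
    have h1 : 0 < 1 + τ^2 * c := by positivity
    have hκi : 1 + τ^2 * c < κ⁻¹ := by
      have := (inv_lt_inv₀ (by positivity) hκ0).mpr hκ
      simpa using this
    refine ⟨(κ⁻¹ - 1) / τ^2, ?_, ?_⟩
    · simp only [mem_Ioi]
      rw [lt_div_iff₀ hτ2]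
      nlinarith
    · have hκ0' : κ ≠ 0 := ne_of_gt hκ0
      field_simp
      have hd : κ * τ ^ 2 + τ ^ 2 * (1 - κ) = τ ^ 2 := by ring
      ring

lemma phi_deriv {τ c : ℝ} (t : ℝ) (ht : t ∈ Ioi c) (hτ : 0 < τ) (hc : 0 ≤ c) :
    HasDerivWithinAt (fun t => (1 + τ^2 * t)⁻¹) (-(τ^2 * 1) / (1 + τ^2 * t)^2) (Ioi c) t := by
  have h0 : 1 + τ^2 * t ≠ 0 := by
    have h1 : c < t := ht
    nlinarith [sq_nonneg τ]
  have h1 : HasDerivAt (fun t : ℝ => 1 + τ^2 * t) (τ^2 * 1) t :=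
    ((hasDerivAt_id t).const_mul (τ^2)).const_add 1
  exact (h1.inv h0).hasDerivWithinAt

lemma phi_inj {τ c : ℝ} (hτ : 0 < τ) (hc : 0 ≤ c) :
    InjOn (fun t => (1 + τ^2 * t)⁻¹) (Ioi c) := by
  intro s hs t ht h
  have h1 : (1:ℝ) + τ^2 * s = 1 + τ^2 * t := inv_inj.mp h
  have hτ2 : 0 < τ^2 := by positivity
  nlinarith

lemma abs_phi_deriv {τ : ℝ} (t : ℝ) :
    |(-(τ^2 * 1) / (1 + τ^2 * t)^2)| = τ^2 / (1 + τ^2 * t)^2 := by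
  rw [abs_div, abs_neg, mul_one, abs_of_nonneg (sq_nonneg τ), abs_of_nonneg (sq_nonneg _)]

lemma cov_eq {τ c : ℝ} (hτ : 0 < τ) (hc : 0 ≤ c) (g : ℝ → ℝ) :
    ∫ κ in Ioo 0 (1 + τ^2 * c)⁻¹, g κ
      = ∫ t in Ioi c, (τ^2 / (1 + τ^2 * t)^2) * g ((1 + τ^2 * t)⁻¹) := by
  rw [← phi_image hτ hc,
    integral_image_eq_integral_abs_deriv_smul measurableSet_Ioi
      (fun t ht => phi_deriv t ht hτ hc) (phi_inj hτ hc) g]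
  congr 1 with t
  rw [abs_phi_deriv, smul_eq_mul]

lemma cov_int {τ c : ℝ} (hτ : 0 < τ) (hc : 0 ≤ c) (g : ℝ → ℝ) :
    IntegrableOn g (Ioo 0 (1 + τ^2 * c)⁻¹)
      ↔ IntegrableOn (fun t => (τ^2 / (1 + τ^2 * t)^2) * g ((1 + τ^2 * t)⁻¹)) (Ioi c) := by
  rw [← phi_image hτ hc,
    integrableOn_image_iff_integrableOn_abs_deriv_smul measurableSet_Ioi
      (fun t ht => phi_deriv t ht hτ hc) (phi_inj hτ hc) g]
  constructor <;> intro h <;> refine h.congr_fun (fun t ht => ?_) measurableSet_Ioi <;>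
    dsimp only <;> rw [abs_phi_deriv, smul_eq_mul]

lemma integrand_eq (a : ℝ) (L : ℝ → ℝ) {τ t : ℝ} (hτ : 0 < τ) (ht : 0 < t) :
    (τ^2 / (1 + τ^2 * t)^2) *
      (((1 + τ^2 * t)⁻¹) ^ (a - 1/2) * (1 - (1 + τ^2 * t)⁻¹) ^ (-a - 1) *
        L ((1/τ^2) * (1/(1 + τ^2 * t)⁻¹ - 1)))
      = (τ^2) ^ (-a) * ((1 + τ^2 * t) ^ (-(1/2) : ℝ) * (t ^ (-a-1) * L t)) := by
  have hτ2 : (0:ℝ) < τ^2 := by positivity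
  have hu : (0:ℝ) < 1 + τ^2 * t := by nlinarith
  have hu' : (1:ℝ) + τ^2 * t ≠ 0 := ne_of_gt hu
  have hL : (1/τ^2) * (1/(1 + τ^2 * t)⁻¹ - 1) = t := by
    field_simp
    ring
  rw [hL]
  have h1 : ((1 + τ^2 * t)⁻¹) ^ (a - 1/2) = (1 + τ^2 * t) ^ (-(a - 1/2)) := by
    rw [Real.inv_rpow hu.le, ← Real.rpow_neg hu.le]
  have h2 : 1 - (1 + τ^2 * t)⁻¹ = (τ^2 * t) / (1 + τ^2 * t) := by field_simp; ring
  have h3 : ((τ^2 * t) / (1 + τ^2 * t)) ^ (-a - 1)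
      = (τ^2) ^ (-a - 1) * t ^ (-a - 1) * (1 + τ^2 * t) ^ (a + 1) := by
    rw [Real.div_rpow (by positivity) hu.le, Real.mul_rpow hτ2.le ht.le,
      div_eq_mul_inv, ← Real.rpow_neg hu.le]
    congr 1
    ring
  rw [h1, h2, h3]
  have hp2 : (1 + τ^2 * t)^2 = (1 + τ^2 * t) ^ (2:ℝ) := by
    rw [← Real.rpow_natCast (1 + τ^2 * t) 2]; norm_num
  rw [hp2]
  rw [div_eq_mul_inv, ← Real.rpow_neg hu.le]
  have key : τ^2 * (τ^2) ^ (-a - 1) = (τ^2) ^ (-a) := by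
    nth_rewrite 1 [← Real.rpow_one (τ^2)]
    rw [← Real.rpow_add hτ2]; norm_num
  have keyu : (1 + τ^2 * t) ^ (-(2:ℝ)) * ((1 + τ^2 * t) ^ (-(a - 1/2)) *
      (1 + τ^2 * t) ^ (a + 1)) = (1 + τ^2 * t) ^ (-(1/2) : ℝ) := by
    rw [← Real.rpow_add hu, ← Real.rpow_add hu]
    congr 1
    ring
  calc (τ^2 * (1 + τ^2 * t) ^ (-(2:ℝ))) *
        ((1 + τ^2 * t) ^ (-(a - 1/2)) * ((τ^2) ^ (-a - 1) * t ^ (-a - 1) *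
          (1 + τ^2 * t) ^ (a + 1)) * L t)
      = (τ^2 * (τ^2) ^ (-a - 1)) * (((1 + τ^2 * t) ^ (-(2:ℝ)) *
          ((1 + τ^2 * t) ^ (-(a - 1/2)) * (1 + τ^2 * t) ^ (a + 1))) *
          (t ^ (-a - 1) * L t)) := by ring
    _ = (τ^2) ^ (-a) * ((1 + τ^2 * t) ^ (-(1/2) : ℝ) * (t ^ (-a-1) * L t)) := by
        rw [key, keyu]


set_option maxHeartbeats 1000000 in
/-- Theorem 4.1 (first concentration inequality): for any fixed `ε ∈ (0,1)` and `τ > 0`,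
`P(κ < ε | x, τ) ≤ K e^{x²/2} (∫_{(1/τ²)(1/ε-1)}^∞ t^{-a-1} L(t) dt) (1 + o(1))`,
where the `o(1)` term is uniform in `x` and tends to `0` as `τ → 0⁺`. -/
theorem concentration_ineq_one (a K : ℝ) (ha : 0 < a) (hK : 0 < K) (L : ℝ → ℝ)
    (hLmeas : Measurable L)
    (hLpos : ∀ t > 0, 0 < L t)
    (hnorm : K * ∫ t in Ioi (0:ℝ), t ^ (-a - 1) * L t = 1) :
    ∃ g : ℝ → ℝ, Tendsto g (𝓝[>] 0) (𝓝 0) ∧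
      ∀ τ > 0, ∀ x : ℝ, ∀ ε ∈ Ioo (0:ℝ) 1,
        (∫ κ in Ioo (0:ℝ) ε, postDens a L τ x κ) /
            (∫ κ in Ioo (0:ℝ) 1, postDens a L τ x κ) ≤
          K * Real.exp (x ^ 2 / 2) *
            (∫ t in Ioi ((1 / τ ^ 2) * (1 / ε - 1)), t ^ (-a - 1) * L t) *
            (1 + g τ) := by
  set base : ℝ → ℝ := fun t => t ^ (-a - 1) * L t with hbase_def
  have hbase_meas : Measurable base := (measurable_id.pow_const _).mul hLmeas
  have hbase_int : IntegrableOn base (Ioi (0:ℝ)) := by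
    by_contra h
    rw [integral_undef h, mul_zero] at hnorm
    exact one_ne_zero hnorm.symm
  have hbase_pos : ∀ t ∈ Ioi (0:ℝ), 0 < base t := fun t ht => by
    have : (0:ℝ) < t := ht
    exact mul_pos (Real.rpow_pos_of_pos this _) (hLpos t this)
  set W : ℝ → ℝ → ℝ := fun τ t => (1 + τ^2 * t) ^ (-(1/2) : ℝ) * base t with hW_def
  have hW_meas : ∀ τ, Measurable (W τ) := fun τ =>
    (((measurable_const.add (measurable_id.const_mul _)).pow_const _)).mul hbase_meas
  have hW_le : ∀ τ : ℝ, ∀ t ∈ Ioi (0:ℝ), ‖W τ t‖ ≤ base t := by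
    intro τ t ht
    have ht' : (0:ℝ) < t := ht
    have h1 : (1:ℝ) ≤ 1 + τ^2 * t := by nlinarith [sq_nonneg τ]
    have h2 : (1 + τ^2 * t) ^ (-(1/2) : ℝ) ≤ 1 :=
      Real.rpow_le_one_of_one_le_of_nonpos h1 (by norm_num)
    have h3 : 0 < (1 + τ^2 * t) ^ (-(1/2) : ℝ) :=
      Real.rpow_pos_of_pos (by linarith) _
    have h4 : 0 < base t := hbase_pos t ht
    rw [Real.norm_eq_abs, abs_of_nonneg (by positivity)]
    calc (1 + τ^2 * t) ^ (-(1/2) : ℝ) * base t ≤ 1 * base t := by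
          exact mul_le_mul_of_nonneg_right h2 h4.le
      _ = base t := one_mul _
  have hW_int : ∀ τ : ℝ, ∀ c : ℝ, 0 ≤ c → IntegrableOn (W τ) (Ioi c) := by
    intro τ c hc
    have hsub : Ioi c ⊆ Ioi (0:ℝ) := Ioi_subset_Ioi hc
    refine Integrable.mono (hbase_int.mono_set hsub) ((hW_meas τ).aestronglyMeasurable.restrict) ?_
    filter_upwards [ae_restrict_mem measurableSet_Ioi] with t ht
    have ht0 : t ∈ Ioi (0:ℝ) := hsub ht
    calc ‖W τ t‖ ≤ base t := hW_le τ t ht0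
      _ ≤ ‖base t‖ := le_abs_self _
  have hIK : (∫ t in Ioi (0:ℝ), base t) = 1/K := by
    rw [eq_div_iff (ne_of_gt hK), mul_comm]; exact hnorm
  set D : ℝ → ℝ := fun τ => ∫ t in Ioi (0:ℝ), W τ t with hD_def
  have hD_tendsto : Tendsto D (𝓝[>] (0:ℝ)) (𝓝 (1/K)) := by
    rw [← hIK]
    refine tendsto_integral_filter_of_dominated_convergence base ?_ ?_ hbase_int ?_
    · exact Eventually.of_forall fun τ => ((hW_meas τ).aestronglyMeasurable).restrict
    · refine Eventually.of_forall fun τ => ?_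
      filter_upwards [ae_restrict_mem measurableSet_Ioi] with t ht
      exact hW_le τ t ht
    · filter_upwards [ae_restrict_mem measurableSet_Ioi] with t ht
      have ht' : (0:ℝ) < t := ht
      have h1 : Tendsto (fun τ : ℝ => 1 + τ^2 * t) (𝓝[>] 0) (𝓝 1) := by
        have h0 : Tendsto (fun τ : ℝ => 1 + τ^2 * t) (𝓝 0) (𝓝 (1 + 0^2 * t)) := by
          apply Continuous.tendsto; continuity
        simpa using h0.mono_left nhdsWithin_le_nhds
      have h2 : Tendsto (fun τ : ℝ => (1 + τ^2 * t) ^ (-(1/2):ℝ)) (𝓝[>] 0) (𝓝 1) := by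
        have := (Real.continuousAt_rpow_const 1 (-(1/2)) (Or.inl one_ne_zero)).tendsto.comp h1
        simpa [Real.one_rpow, Function.comp_def] using this
      have h3 := h2.mul (tendsto_const_nhds (x := base t))
      rw [one_mul] at h3
      exact h3
  have hD_pos : ∀ τ : ℝ, 0 < D τ := by
    intro τ
    have hint := hW_int τ 0 le_rfl
    refine (setIntegral_pos_iff_support_of_nonneg_ae ?_ hint).mpr ?_
    · filter_upwards [ae_restrict_mem measurableSet_Ioi] with t ht
      have hb := hbase_pos t ht
      have ht' : (0:ℝ) < t := ht
      have h3 : 0 < (1 + τ^2 * t) ^ (-(1/2):ℝ) :=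
        Real.rpow_pos_of_pos (by nlinarith [sq_nonneg τ]) _
      exact (mul_pos h3 hb).le
    · have hsub : Ioo (0:ℝ) 1 ⊆ Function.support (W τ) ∩ Ioi 0 := by
        intro t ht
        have ht' : (0:ℝ) < t := ht.1
        have hb := hbase_pos t ht'
        have h3 : 0 < (1 + τ^2 * t) ^ (-(1/2):ℝ) :=
          Real.rpow_pos_of_pos (by nlinarith [sq_nonneg τ]) _
        exact ⟨ne_of_gt (mul_pos h3 hb), ht'⟩
      calc (0:ENNReal) < volume (Ioo (0:ℝ) 1) := by simp [Real.volume_Ioo]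
        _ ≤ _ := measure_mono hsub
  refine ⟨fun τ => (K * D τ)⁻¹ - 1, ?_, ?_⟩
  · have h1 : Tendsto (fun τ => K * D τ) (𝓝[>] (0:ℝ)) (𝓝 (K * (1/K))) :=
      tendsto_const_nhds.mul hD_tendsto
    have h2 : K * (1/K) = 1 := by field_simp
    rw [h2] at h1
    have h3 := (h1.inv₀ one_ne_zero).sub (tendsto_const_nhds (x := (1:ℝ)))
    simpa using h3
  intro τ hτ x ε hε
  obtain ⟨hε0, hε1⟩ := hε
  have hτ2 : (0:ℝ) < τ^2 := by positivity
  set c : ℝ := (1/τ^2) * (1/ε - 1) with hc_def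
  have hεlt : 1 < 1/ε := by rw [lt_div_iff₀ hε0]; linarith
  have hc0 : 0 < c := mul_pos (by positivity) (by linarith)
  have hεc : (1 + τ^2 * c)⁻¹ = ε := by
    rw [hc_def]
    field_simp
    ring
  set f : ℝ → ℝ := fun κ => κ ^ (a - 1/2) * (1 - κ) ^ (-a - 1) *
    L ((1 / τ ^ 2) * (1 / κ - 1)) with hf_def
  have h10 : (1 + τ^2 * (0:ℝ))⁻¹ = 1 := by norm_num
  have cov1 : ∫ κ in Ioo (0:ℝ) ε, f κ = ∫ t in Ioi c, (τ^2) ^ (-a) * W τ t := by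
    rw [← hεc, cov_eq hτ hc0.le f]
    refine setIntegral_congr_fun measurableSet_Ioi fun t ht => ?_
    have ht0 : (0:ℝ) < t := lt_trans hc0 ht
    simpa [hf_def, hW_def, hbase_def, mul_assoc] using integrand_eq a L hτ ht0
  have cov1' : IntegrableOn f (Ioo (0:ℝ) ε) := by
    rw [← hεc, cov_int hτ hc0.le f]
    refine IntegrableOn.congr_fun ((hW_int τ c hc0.le).const_mul ((τ^2) ^ (-a)))
      (fun t ht => ?_) measurableSet_Ioi
    have ht0 : (0:ℝ) < t := lt_trans hc0 ht
    simpa [hf_def, hW_def, hbase_def, mul_assoc] using (integrand_eq a L hτ ht0).symm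
  have cov2 : ∫ κ in Ioo (0:ℝ) 1, f κ = ∫ t in Ioi (0:ℝ), (τ^2) ^ (-a) * W τ t := by
    rw [← h10, cov_eq hτ le_rfl f]
    refine setIntegral_congr_fun measurableSet_Ioi fun t ht => ?_
    have ht0 : (0:ℝ) < t := ht
    simpa [hf_def, hW_def, hbase_def, mul_assoc] using integrand_eq a L hτ ht0
  have cov2' : IntegrableOn f (Ioo (0:ℝ) 1) := by
    rw [← h10, cov_int hτ le_rfl f]
    refine IntegrableOn.congr_fun ((hW_int τ 0 le_rfl).const_mul ((τ^2) ^ (-a)))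
      (fun t ht => ?_) measurableSet_Ioi
    have ht0 : (0:ℝ) < t := ht
    simpa [hf_def, hW_def, hbase_def, mul_assoc] using (integrand_eq a L hτ ht0).symm
  have hf_pos : ∀ κ ∈ Ioo (0:ℝ) 1, 0 < f κ := by
    intro κ hκ
    have h1 : 0 < κ := hκ.1
    have h2 : κ < 1 := hκ.2
    have hκi : 1 < 1/κ := by rw [lt_div_iff₀ h1]; linarith
    have hLarg : 0 < (1 / τ ^ 2) * (1 / κ - 1) := mul_pos (by positivity) (by linarith)
    exact mul_pos (mul_pos (Real.rpow_pos_of_pos h1 _)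
      (Real.rpow_pos_of_pos (by linarith) _)) (hLpos _ hLarg)
  have hpd : ∀ κ, postDens a L τ x κ = f κ * Real.exp (-(κ * x^2)/2) := fun κ => rfl
  have hpd_meas : Measurable (fun κ => postDens a L τ x κ) := by
    unfold postDens
    exact (((measurable_id.pow_const _).mul
      ((measurable_const.sub measurable_id).pow_const _)).mul
      (hLmeas.comp (((measurable_const.div measurable_id).sub measurable_const).const_mul _))).mul
      ((Real.continuous_exp.measurable).comp (((measurable_id.mul measurable_const).neg).div_const _))
  have hexp_le : ∀ κ ∈ Ioo (0:ℝ) 1, Real.exp (-(κ * x^2)/2) ≤ 1 := by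
    intro κ hκ
    rw [← Real.exp_zero]
    exact Real.exp_le_exp.mpr (by nlinarith [sq_nonneg x, hκ.1.le])
  have hpd_int : ∀ s : Set ℝ, MeasurableSet s → s ⊆ Ioo (0:ℝ) 1 → IntegrableOn f s →
      IntegrableOn (fun κ => postDens a L τ x κ) s := by
    intro s hms hsub hfint
    refine Integrable.mono hfint (hpd_meas.aestronglyMeasurable.restrict) ?_
    filter_upwards [ae_restrict_mem hms] with κ hκ
    have hκ1 := hsub hκ
    rw [hpd κ, Real.norm_eq_abs, Real.norm_eq_abs, abs_mul,
      abs_of_pos (Real.exp_pos _)]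
    calc |f κ| * Real.exp (-(κ * x^2)/2) ≤ |f κ| * 1 :=
        mul_le_mul_of_nonneg_left (hexp_le κ hκ1) (abs_nonneg _)
      _ = |f κ| := mul_one _
  have hsubε : Ioo (0:ℝ) ε ⊆ Ioo (0:ℝ) 1 := Ioo_subset_Ioo le_rfl hε1.le
  have hpd_intε := hpd_int _ measurableSet_Ioo hsubε cov1'
  have hpd_int1 := hpd_int _ measurableSet_Ioo (subset_rfl) cov2'
  -- numerator bound
  have hNle : (∫ κ in Ioo (0:ℝ) ε, postDens a L τ x κ) ≤ ∫ κ in Ioo (0:ℝ) ε, f κ := by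
    refine setIntegral_mono_on hpd_intε cov1' measurableSet_Ioo fun κ hκ => ?_
    have hκ1 : κ ∈ Ioo (0:ℝ) 1 := hsubε hκ
    rw [hpd κ]
    calc f κ * Real.exp (-(κ * x^2)/2) ≤ f κ * 1 :=
        mul_le_mul_of_nonneg_left (hexp_le κ hκ1) (hf_pos κ hκ1).le
      _ = f κ := mul_one _
  have htail : (∫ t in Ioi c, W τ t) ≤ ∫ t in Ioi c, base t := by
    refine setIntegral_mono_on (hW_int τ c hc0.le)
      (hbase_int.mono_set (Ioi_subset_Ioi hc0.le)) measurableSet_Ioi fun t ht => ?_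
    exact le_trans (le_abs_self _) (hW_le τ t (lt_trans hc0 ht))
  have htail_nonneg : 0 ≤ ∫ t in Ioi c, base t :=
    setIntegral_nonneg measurableSet_Ioi fun t ht => (hbase_pos t (lt_trans hc0 ht)).le
  have hrpow_pos : 0 < (τ^2) ^ (-a) := Real.rpow_pos_of_pos hτ2 _
  have hNle2 : (∫ κ in Ioo (0:ℝ) ε, postDens a L τ x κ) ≤ (τ^2) ^ (-a) * ∫ t in Ioi c, base t := by
    refine le_trans hNle ?_
    rw [cov1, integral_const_mul]
    exact mul_le_mul_of_nonneg_left htail hrpow_pos.le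
  -- denominator bound
  have hDenge : Real.exp (-(x^2)/2) * ((τ^2) ^ (-a) * D τ) ≤
      ∫ κ in Ioo (0:ℝ) 1, postDens a L τ x κ := by
    have heq : ∫ κ in Ioo (0:ℝ) 1, Real.exp (-(x^2)/2) * f κ
        = Real.exp (-(x^2)/2) * ((τ^2) ^ (-a) * D τ) := by
      rw [integral_const_mul, cov2, integral_const_mul]
    rw [← heq]
    refine setIntegral_mono_on (cov2'.const_mul _) hpd_int1 measurableSet_Ioo fun κ hκ => ?_
    rw [hpd κ, mul_comm]
    refine mul_le_mul_of_nonneg_left ?_ (hf_pos κ hκ).le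
    exact Real.exp_le_exp.mpr (by nlinarith [sq_nonneg x, hκ.1.le, hκ.2.le])
  have hB_pos : 0 < Real.exp (-(x^2)/2) * ((τ^2) ^ (-a) * D τ) :=
    mul_pos (Real.exp_pos _) (mul_pos hrpow_pos (hD_pos τ))
  have hdiv : (∫ κ in Ioo (0:ℝ) ε, postDens a L τ x κ) /
      (∫ κ in Ioo (0:ℝ) 1, postDens a L τ x κ) ≤
      ((τ^2) ^ (-a) * ∫ t in Ioi c, base t) /
      (Real.exp (-(x^2)/2) * ((τ^2) ^ (-a) * D τ)) :=
    div_le_div₀ (by positivity) hNle2 hB_pos hDenge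
  refine le_trans hdiv (le_of_eq ?_)
  have h1g : 1 + ((K * D τ)⁻¹ - 1) = (K * D τ)⁻¹ := by ring
  rw [h1g]
  have hx2 : -(x^2)/2 = -(x^2/2) := by ring
  rw [hx2, Real.exp_neg]
  have hDne : D τ ≠ 0 := ne_of_gt (hD_pos τ)
  have hKne : K ≠ 0 := ne_of_gt hK
  have hexne : Real.exp (x^2/2) ≠ 0 := Real.exp_ne_zero _
  have hrne : ((τ^2) ^ (-a) : ℝ) ≠ 0 := ne_of_gt hrpow_pos
  field_simp
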